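/- Let X be an infinite-dimensional complex Banach space. Then G_a(X) = 1 if and only if for every p ∈ [2, ∞) there exists a sequence (x_n)_{n≥1} in X with Σ_n |x'(x_n)| < ∞ for every continuous linear functional x' ∈ X' but Σ_n ‖x_n‖^p = ∞ (i.e. the identity of X is not (p,1)-summing for any 2 ≤ p < ∞). Here G_a(X) is the gap for absolute convergence of Dirichlet series in X. -/

import Mathlib

open Filter Finset Topology

/-- The abscissa of convergence `σ_c(D)` of the Dirichlet series `D = ∑ₙ aₙ n^{-s}`,
as an extended real number. -/
noncomputable def dirichletSigmaC {X : Type*} [NormedAddCommGroup X] [NormedSpace ℂ X]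
    (a : ℕ → X) : EReal :=
  sInf { x : EReal | ∃ r : ℝ, x = (r : EReal) ∧ ∀ s : ℂ, r < s.re →
    ∃ L : X, Tendsto
      (fun N : ℕ => ∑ n ∈ Finset.range N, (((n + 1 : ℕ) : ℂ) ^ (-s)) • a (n + 1))
      atTop (𝓝 L) }

/-- The abscissa of absolute convergence `σ_a(D)` of `D = ∑ₙ aₙ n^{-s}`. -/
noncomputable def dirichletSigmaA {X : Type*} [SeminormedAddCommGroup X]
    (a : ℕ → X) : EReal :=
  sInf { x : EReal | ∃ r : ℝ, x = (r : EReal) ∧ ∀ σ : ℝ, r < σ →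
    Summable (fun n : ℕ => ‖a (n + 1)‖ * ((n + 1 : ℕ) : ℝ) ^ (-σ)) }

/-- The abscissa of weak absolute convergence `σ_a^w(D) = sup_{x'} σ_a(x'(D))`. -/
noncomputable def dirichletSigmaAw {X : Type*} [NormedAddCommGroup X] [NormedSpace ℂ X]
    (a : ℕ → X) : EReal :=
  ⨆ x' : X →L[ℂ] ℂ, dirichletSigmaA (fun n => x' (a n))

/-- The gap for absolute convergence of Dirichlet series in `X`:
`G_a(X) = sup_D (σ_a(D) - σ_a^w(D))`, the supremum over all Dirichlet series with
coefficients in `X` and finite abscissa of convergence. -/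
noncomputable def dirichletGapA (X : Type*) [NormedAddCommGroup X] [NormedSpace ℂ X] :
    EReal :=
  sSup { g : EReal | ∃ a : ℕ → X, dirichletSigmaC a < ⊤ ∧
    g = dirichletSigmaA a - dirichletSigmaAw a }


section DirichletHelpers

lemma pser_summable' {c : ℝ} (hc : 1 < c) :
    Summable (fun n : ℕ => ((n + 1 : ℕ) : ℝ) ^ (-c)) := by
  have h : Summable (fun n : ℕ => (n : ℝ) ^ (-c)) := Real.summable_nat_rpow.2 (by linarith)
  exact ((summable_nat_add_iff 1).2 h).congr (by intro n; push_cast; ring_nf)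

lemma pser_not_summable' {c : ℝ} (hc : c ≤ 1) :
    ¬ Summable (fun n : ℕ => ((n + 1 : ℕ) : ℝ) ^ (-c)) := by
  intro h
  have h2 : Summable (fun n : ℕ => (n : ℝ) ^ (-c)) := by
    refine (summable_nat_add_iff 1).1 (h.congr ?_)
    intro n; push_cast; ring_nf
  have := Real.summable_nat_rpow.1 h2
  linarith

lemma ereal_eq_bot_of_le_forall {x : EReal} (h : ∀ w : ℝ, x ≤ (w : EReal)) : x = ⊥ := by
  induction x using EReal.rec with
  | bot => rfl
  | coe r => exfalso; have := h (r - 1); rw [EReal.coe_le_coe_iff] at this; linarith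
  | top => exfalso; exact (not_le.2 (EReal.coe_lt_top 0)) (h 0)

lemma ereal_le_coe_of_forall_lt {x : EReal} {r c : ℝ}
    (h : ∀ w : ℝ, r < w → x ≤ ((w + c : ℝ) : EReal)) : x ≤ ((r + c : ℝ) : EReal) := by
  induction x using EReal.rec with
  | bot => exact bot_le
  | coe s =>
    rw [EReal.coe_le_coe_iff]
    by_contra hc
    push_neg at hc
    have h2 := h ((r + (s - c)) / 2) (by linarith)
    rw [EReal.coe_le_coe_iff] at h2
    linarith
  | top => exfalso; exact (not_le.2 (EReal.coe_lt_top _)) (h (r + 1) (by linarith))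

/-- If `μ` is nonneg, antitone, and `∑ μ n ^ p = ∞` with `0 < σ₀ < 1 - 1/p`,
then `∑ μ (n+1) (n+1)^{-σ₀} = ∞`. -/
lemma antitone_not_summable (μ : ℕ → ℝ) (hnn : ∀ n, 0 ≤ μ n)
    (hanti : Antitone μ) (p σ₀ : ℝ) (hp : 2 ≤ p) (hσ₀ : 0 < σ₀) (hσ₁ : σ₀ < 1 - 1/p)
    (hns : ¬ Summable (fun n => μ n ^ p)) :
    ¬ Summable (fun n : ℕ => μ (n + 1) * ((n + 1 : ℕ) : ℝ) ^ (-σ₀)) := by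
  intro h
  have hp0 : (0:ℝ) < p := by linarith
  have hinvp : (0:ℝ) < 1/p := by positivity
  have hσlt1 : σ₀ < 1 := by linarith
  set f : ℕ → ℝ := fun n => μ (n + 1) * ((n + 1 : ℕ) : ℝ) ^ (-σ₀) with hf
  have hfnn : ∀ n, 0 ≤ f n := fun n => mul_nonneg (hnn _) (Real.rpow_nonneg (by positivity) _)
  set T := ∑' n, f n with hT
  have hT0 : 0 ≤ T := tsum_nonneg hfnn
  have stepA : ∀ N : ℕ, μ (2*N + 2) * ((2*N + 2 : ℕ) : ℝ) ^ (-σ₀) * ((N : ℝ) + 1) ≤ T := by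
    intro N
    have hcard : (Finset.Ico N (2*N + 1)).card = N + 1 := by
      rw [Nat.card_Ico]; omega
    have hsum1 : ∑ n ∈ Finset.Ico N (2*N + 1), (μ (2*N + 2) * ((2*N + 2 : ℕ) : ℝ) ^ (-σ₀))
        ≤ ∑ n ∈ Finset.Ico N (2*N + 1), f n := by
      refine Finset.sum_le_sum fun n hn => ?_
      rw [Finset.mem_Ico] at hn
      have h1 : μ (2*N + 2) ≤ μ (n + 1) := hanti (by omega)
      have h2 : ((2*N + 2 : ℕ) : ℝ) ^ (-σ₀) ≤ ((n + 1 : ℕ) : ℝ) ^ (-σ₀) := by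
        apply Real.rpow_le_rpow_of_nonpos (by positivity)
          (by exact_mod_cast (by omega : n + 1 ≤ 2*N + 2)) (by linarith)
      exact mul_le_mul h1 h2 (Real.rpow_nonneg (by positivity) _) (hnn _)
    have hsum2 : ∑ n ∈ Finset.Ico N (2*N + 1), f n ≤ T :=
      Summable.sum_le_tsum _ (fun n _ => hfnn n) h
    rw [Finset.sum_const, hcard] at hsum1
    have : ((N:ℝ) + 1) * (μ (2*N + 2) * ((2*N + 2 : ℕ) : ℝ) ^ (-σ₀)) ≤ T := by
      refine le_trans ?_ (le_trans hsum1 hsum2)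
      rw [nsmul_eq_mul]
      push_cast
      ring_nf
      exact le_refl _
    linarith [this]
  have stepA' : ∀ m : ℕ, μ (m + 2) ≤ 4 * T * ((m : ℝ) + 2) ^ (σ₀ - 1) := by
    intro m
    set N := m / 2 with hN
    have hm1 : 2*N + 2 ≤ m + 2 := by omega
    have hm2 : m + 2 ≤ 2*N + 4 := by omega
    have hmain : μ (m + 2) * ((m : ℝ) + 2) ^ (1 - σ₀) ≤ 4 * T := by
      have hb1 : μ (m + 2) ≤ μ (2*N + 2) := hanti hm1
      have hpos1 : (0:ℝ) < (m : ℝ) + 2 := by positivity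
      have hpos2 : (0:ℝ) < (2*(N:ℝ) + 2) := by positivity
      have hb2 : ((m : ℝ) + 2) ^ (1 - σ₀) ≤ 2 * (2*(N:ℝ) + 2) ^ (1 - σ₀) := by
        have e1 : ((m : ℝ) + 2) ^ (1 - σ₀) ≤ (2*(2*(N:ℝ) + 2)) ^ (1 - σ₀) := by
          have hm2' : (m:ℝ) + 2 ≤ 2*(N:ℝ) + 4 := by exact_mod_cast hm2
          apply Real.rpow_le_rpow hpos1.le (by linarith) (by linarith)
        have e2 : ((2:ℝ)*(2*(N:ℝ) + 2)) ^ (1 - σ₀) = 2 ^ (1 - σ₀) * (2*(N:ℝ) + 2) ^ (1 - σ₀) :=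
          Real.mul_rpow (by norm_num) hpos2.le
        have e3 : (2:ℝ) ^ (1 - σ₀) ≤ 2 := by
          calc (2:ℝ) ^ (1 - σ₀) ≤ (2:ℝ) ^ (1:ℝ) :=
                Real.rpow_le_rpow_of_exponent_le (by norm_num) (by linarith)
            _ = 2 := Real.rpow_one 2
        calc ((m : ℝ) + 2) ^ (1 - σ₀) ≤ 2 ^ (1 - σ₀) * (2*(N:ℝ) + 2) ^ (1 - σ₀) := by
              rw [← e2]; exact e1
          _ ≤ 2 * (2*(N:ℝ) + 2) ^ (1 - σ₀) :=
              mul_le_mul_of_nonneg_right e3 (Real.rpow_nonneg hpos2.le _)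
      have hsplit : (2*(N:ℝ) + 2) ^ (1 - σ₀) = (2*(N:ℝ) + 2) * (2*(N:ℝ) + 2) ^ (-σ₀) := by
        rw [show (1 - σ₀) = 1 + (-σ₀) by ring, Real.rpow_add hpos2, Real.rpow_one]
      have hcast : ((2*N + 2 : ℕ) : ℝ) = 2*(N:ℝ) + 2 := by push_cast; ring
      have hA := stepA N
      rw [hcast] at hA
      calc μ (m + 2) * ((m : ℝ) + 2) ^ (1 - σ₀)
          ≤ μ (2*N + 2) * (2 * (2*(N:ℝ) + 2) ^ (1 - σ₀)) := by
            apply mul_le_mul hb1 hb2 (Real.rpow_nonneg hpos1.le _) (hnn _)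
        _ = 2 * (μ (2*N + 2) * ((2*(N:ℝ) + 2) * (2*(N:ℝ) + 2) ^ (-σ₀))) := by
            rw [hsplit]; ring
        _ ≤ 2 * (μ (2*N + 2) * ((2*((N:ℝ) + 1)) * (2*(N:ℝ) + 2) ^ (-σ₀))) := by
            apply mul_le_mul_of_nonneg_left _ (by norm_num)
            apply mul_le_mul_of_nonneg_left _ (hnn _)
            apply mul_le_mul_of_nonneg_right (by linarith) (Real.rpow_nonneg hpos2.le _)
        _ = 4 * (μ (2*N + 2) * (2*(N:ℝ) + 2) ^ (-σ₀) * ((N:ℝ) + 1)) := by ring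
        _ ≤ 4 * T := by linarith [hA]
    have hpos1 : (0:ℝ) < (m : ℝ) + 2 := by positivity
    have hmul := mul_le_mul_of_nonneg_right hmain (Real.rpow_nonneg hpos1.le (σ₀ - 1))
    rw [mul_assoc, ← Real.rpow_add hpos1] at hmul
    simp only [show (1 - σ₀) + (σ₀ - 1) = 0 by ring, Real.rpow_zero, mul_one] at hmul
    exact hmul
  apply hns
  rw [← summable_nat_add_iff 2]
  have hexp : (σ₀ - 1) * p < -1 := by
    have key : (σ₀ - 1) * p < (-(1/p)) * p := mul_lt_mul_of_pos_right (by linarith) hp0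
    have he : (-(1/p)) * p = -1 := by field_simp
    linarith
  have hsb : Summable (fun m : ℕ => (4*T) ^ p * ((m:ℝ) + 2) ^ ((σ₀ - 1) * p)) := by
    apply Summable.mul_left
    have h0 : Summable (fun m : ℕ => ((m:ℝ)) ^ ((σ₀ - 1) * p)) := Real.summable_nat_rpow.2 hexp
    exact ((summable_nat_add_iff 2).2 h0).congr (by intro n; push_cast; ring_nf)
  refine hsb.of_nonneg_of_le (fun m => Real.rpow_nonneg (hnn _) _) (fun m => ?_)
  have hpos1 : (0:ℝ) < (m : ℝ) + 2 := by positivity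
  calc μ (m + 2) ^ p ≤ (4 * T * ((m : ℝ) + 2) ^ (σ₀ - 1)) ^ p :=
        Real.rpow_le_rpow (hnn _) (stepA' m) hp0.le
    _ = (4*T) ^ p * (((m : ℝ) + 2) ^ (σ₀ - 1)) ^ p :=
        Real.mul_rpow (by positivity) (Real.rpow_nonneg hpos1.le _)
    _ = (4*T) ^ p * ((m:ℝ) + 2) ^ ((σ₀ - 1) * p) := by
        rw [← Real.rpow_mul hpos1.le]

/-- Greedy decreasing-rearrangement selection. -/
lemma greedy_exists {X : Type*} [NormedAddCommGroup X] (x : ℕ → X)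
    (hfin : ∀ t : ℝ, 0 < t → {k | t ≤ ‖x k‖}.Finite)
    (hSinf : {k | x k ≠ 0}.Infinite) :
    ∃ e : ℕ → ℕ, Function.Injective e ∧ (∀ n, x (e n) ≠ 0) ∧
      Antitone (fun n => ‖x (e n)‖) ∧ {k | x k ≠ 0} ⊆ Set.range e := by
  classical
  set S := {k | x k ≠ 0} with hS
  have hpick : ∀ u : Finset ℕ, ∃ k, k ∈ S ∧ k ∉ u ∧
      ∀ j ∈ S, j ∉ u → ‖x j‖ ≤ ‖x k‖ := by
    intro u
    obtain ⟨k₀, hk₀⟩ := (hSinf.diff u.finite_toSet).nonempty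
    have hk₀S : k₀ ∈ S := hk₀.1
    have ht0 : 0 < ‖x k₀‖ := norm_pos_iff.2 hk₀S
    set B := {j | ‖x k₀‖ ≤ ‖x j‖} ∩ (S \ ↑u) with hB
    have hBfin : B.Finite := (hfin _ ht0).subset Set.inter_subset_left
    have hk₀B : k₀ ∈ B := ⟨Set.mem_setOf_eq ▸ le_refl ‖x k₀‖, hk₀⟩
    obtain ⟨k, hkB, hkmax⟩ := hBfin.toFinset.exists_max_image (fun j => ‖x j‖)
      ⟨k₀, hBfin.mem_toFinset.2 hk₀B⟩
    rw [Set.Finite.mem_toFinset] at hkB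
    refine ⟨k, hkB.2.1, fun hmem => hkB.2.2 (Finset.mem_coe.2 hmem), fun j hjS hju => ?_⟩
    by_cases hcase : ‖x k₀‖ ≤ ‖x j‖
    · exact hkmax j (hBfin.mem_toFinset.2 ⟨hcase, hjS, fun hmem => hju (Finset.mem_coe.1 hmem)⟩)
    · push_neg at hcase
      exact le_trans hcase.le hkB.1
  set P : Finset ℕ → ℕ := fun u => (hpick u).choose with hP
  have hPspec : ∀ u : Finset ℕ, P u ∈ S ∧ P u ∉ u ∧
      ∀ j ∈ S, j ∉ u → ‖x j‖ ≤ ‖x (P u)‖ := fun u => (hpick u).choose_spec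
  set g : ℕ → ℕ × Finset ℕ :=
    fun n => Nat.rec (P ∅, {P ∅}) (fun _ ih => (P ih.2, insert (P ih.2) ih.2)) n with hg
  set e : ℕ → ℕ := fun n => (g n).1 with he
  set u : ℕ → Finset ℕ := fun n => (g n).2 with hu
  have hg0 : e 0 = P ∅ ∧ u 0 = {P ∅} := ⟨rfl, rfl⟩
  have hgs : ∀ n, e (n+1) = P (u n) ∧ u (n+1) = insert (P (u n)) (u n) := fun n => ⟨rfl, rfl⟩
  have hmem_u : ∀ n j, j ∈ u n ↔ ∃ m, m ≤ n ∧ e m = j := by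
    intro n
    induction n with
    | zero =>
      intro j
      rw [hg0.2]
      simp only [Finset.mem_singleton]
      constructor
      · rintro rfl; exact ⟨0, le_refl _, hg0.1⟩
      · rintro ⟨m, hm, rfl⟩
        have : m = 0 := Nat.le_zero.1 hm
        subst this; exact hg0.1.symm
    | succ n ih =>
      intro j
      rw [(hgs n).2]
      simp only [Finset.mem_insert]
      constructor
      · rintro (rfl | hj)
        · exact ⟨n+1, le_refl _, (hgs n).1⟩
        · obtain ⟨m, hm, rfl⟩ := (ih j).1 hj
          exact ⟨m, by omega, rfl⟩
      · rintro ⟨m, hm, rfl⟩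
        rcases Nat.eq_or_lt_of_le hm with rfl | hlt
        · exact Or.inl (hgs n).1.symm
        · exact Or.inr ((ih (e m)).2 ⟨m, by omega, rfl⟩)
  have heS : ∀ n, e n ∈ S := by
    intro n
    cases n with
    | zero => rw [hg0.1]; exact (hPspec ∅).1
    | succ n => rw [(hgs n).1]; exact (hPspec (u n)).1
  have hnotmem : ∀ n, e (n+1) ∉ u n := by
    intro n; rw [(hgs n).1]; exact (hPspec (u n)).2.1
  have hmax : ∀ n, ∀ j ∈ S, j ∉ u n → ‖x j‖ ≤ ‖x (e (n+1))‖ := by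
    intro n j hj hju; rw [(hgs n).1]; exact (hPspec (u n)).2.2 j hj hju
  have hmax0 : ∀ j ∈ S, ‖x j‖ ≤ ‖x (e 0)‖ := by
    intro j hj; rw [hg0.1]
    exact (hPspec ∅).2.2 j hj (Finset.notMem_empty j)
  have hinj : Function.Injective e := by
    have hne : ∀ m n, m < n → e n ≠ e m := by
      intro m n hlt
      obtain ⟨k, rfl⟩ : ∃ k, n = k + 1 := ⟨n - 1, by omega⟩
      intro heq
      exact hnotmem k ((hmem_u k (e m)).2 ⟨m, by omega, rfl⟩ |> (heq ▸ ·))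
    intro m n hmn
    rcases lt_trichotomy m n with h | h | h
    · exact absurd hmn.symm (hne m n h)
    · exact h
    · exact absurd hmn (hne n m h)
  have hantistep : ∀ n, ‖x (e (n+1))‖ ≤ ‖x (e n)‖ := by
    intro n
    cases n with
    | zero => exact hmax0 _ (heS 1)
    | succ k =>
      have h1 : e (k+2) ∉ u k := by
        intro hmem
        apply hnotmem (k+1)
        rw [(hgs k).2]
        exact Finset.mem_insert_of_mem hmem
      exact hmax k _ (heS (k+2)) h1
  refine ⟨e, hinj, fun n => heS n, antitone_nat_of_succ_le hantistep, ?_⟩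
  intro k hk
  by_contra hnot
  rw [Set.mem_range] at hnot
  push_neg at hnot
  have hknotu : ∀ n, k ∉ u n := by
    intro n hmem
    obtain ⟨m, _, hm⟩ := (hmem_u n k).1 hmem
    exact hnot m hm
  have hge : ∀ n, e n ∈ {j | ‖x k‖ ≤ ‖x j‖} := by
    intro n
    cases n with
    | zero => exact hmax0 k hk
    | succ m => exact hmax m k hk (hknotu m)
  have hpos : 0 < ‖x k‖ := norm_pos_iff.2 hk
  have hrange : Set.range e ⊆ {j | ‖x k‖ ≤ ‖x j‖} := by
    rintro _ ⟨n, rfl⟩; exact hge n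
  exact (((hfin _ hpos).subset hrange)).not_infinite (Set.infinite_range_of_injective hinj)

end DirichletHelpers

section MainSection

variable {X : Type*} [NormedAddCommGroup X] [NormedSpace ℂ X]

lemma norm_y (a : ℕ → X) (w : ℝ) (n : ℕ) :
    ‖(((n + 1 : ℕ) : ℝ) ^ (-w)) • a (n + 1)‖ = ((n + 1 : ℕ) : ℝ) ^ (-w) * ‖a (n + 1)‖ := by
  rw [norm_smul, Real.norm_eq_abs, abs_of_nonneg (Real.rpow_nonneg (by positivity) _)]

lemma weak_y (a : ℕ → X) (w : ℝ) (x' : X →L[ℂ] ℂ) (n : ℕ) :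
    ‖x' ((((n + 1 : ℕ) : ℝ) ^ (-w)) • a (n + 1))‖
      = ‖x' (a (n + 1))‖ * ((n + 1 : ℕ) : ℝ) ^ (-w) := by
  rw [x'.map_smul_of_tower, norm_smul, Real.norm_eq_abs,
    abs_of_nonneg (Real.rpow_nonneg (by positivity) _), mul_comm]

lemma rw_final (a : ℕ → X) (w σ : ℝ) (n : ℕ) :
    ‖a (n + 1)‖ * ((n + 1 : ℕ) : ℝ) ^ (-σ)
      = ‖(((n + 1 : ℕ) : ℝ) ^ (-w)) • a (n + 1)‖ * ((n + 1 : ℕ) : ℝ) ^ (-(σ - w)) := by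
  have hpos : (0:ℝ) < ((n + 1 : ℕ) : ℝ) := by positivity
  have h2 : ((n + 1 : ℕ) : ℝ) ^ (-w) * ((n + 1 : ℕ) : ℝ) ^ (-(σ - w))
      = ((n + 1 : ℕ) : ℝ) ^ (-σ) := by
    rw [← Real.rpow_add hpos]; ring_nf
  rw [norm_y, ← h2]; ring

/-- Banach–Steinhaus: a weakly ℓ¹ sequence is norm bounded. -/
lemma weak_l1_bounded (y : ℕ → X)
    (h : ∀ x' : X →L[ℂ] ℂ, Summable (fun n => ‖x' (y n)‖)) :
    ∃ C : ℝ, ∀ n, ‖y n‖ ≤ C := by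
  set g : ℕ → StrongDual ℂ X →L[ℂ] ℂ :=
    fun n => NormedSpace.inclusionInDoubleDualLi ℂ (y n) with hg
  have hpt : ∀ x' : StrongDual ℂ X, ∃ C, ∀ n, ‖g n x'‖ ≤ C := by
    intro x'
    refine ⟨∑' n, ‖x' (y n)‖, fun n => ?_⟩
    have : (g n) x' = x' (y n) := rfl
    rw [this]
    exact Summable.le_tsum (h x') n (fun j _ => norm_nonneg _)
  obtain ⟨C, hC⟩ := banach_steinhaus hpt
  refine ⟨C, fun n => ?_⟩
  calc ‖y n‖ = ‖g n‖ := ((NormedSpace.inclusionInDoubleDualLi ℂ).norm_map (y n)).symm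
    _ ≤ C := hC n

lemma sigmaA_ge {a : ℕ → X} {σ₀ : ℝ}
    (h : ¬ Summable (fun n : ℕ => ‖a (n + 1)‖ * ((n + 1 : ℕ) : ℝ) ^ (-σ₀))) :
    (σ₀ : EReal) ≤ dirichletSigmaA a := by
  refine le_sInf ?_
  rintro x ⟨r, rfl, hr⟩
  rw [EReal.coe_le_coe_iff]
  by_contra hlt
  exact h (hr σ₀ (by linarith [not_le.1 hlt]))

lemma sigmaAw_le_zero {a : ℕ → X}
    (h : ∀ x' : X →L[ℂ] ℂ, Summable (fun n => ‖x' (a (n + 1))‖)) :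
    dirichletSigmaAw a ≤ ((0 : ℝ) : EReal) := by
  refine iSup_le fun x' => sInf_le ⟨0, rfl, fun σ hσ => ?_⟩
  refine (h x').of_nonneg_of_le (fun n => by positivity) (fun n => ?_)
  have h1 : ((n + 1 : ℕ) : ℝ) ^ (-σ) ≤ 1 :=
    Real.rpow_le_one_of_one_le_of_nonpos (by exact_mod_cast Nat.one_le_iff_ne_zero.2 (by simp))
      (by linarith)
  calc ‖x' (a (n + 1))‖ * ((n + 1 : ℕ) : ℝ) ^ (-σ) ≤ ‖x' (a (n + 1))‖ * 1 :=
        mul_le_mul_of_nonneg_left h1 (norm_nonneg _)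
    _ = ‖x' (a (n + 1))‖ := mul_one _

lemma sigmaC_lt_top_of_bounded [CompleteSpace X] {a : ℕ → X} {C : ℝ}
    (hC : ∀ n, ‖a n‖ ≤ C) : dirichletSigmaC a < ⊤ := by
  refine lt_of_le_of_lt (sInf_le ⟨2, rfl, fun s hs => ?_⟩) (EReal.coe_lt_top 2)
  have hsum : Summable (fun n : ℕ => (((n + 1 : ℕ) : ℂ) ^ (-s)) • a (n + 1)) := by
    refine Summable.of_norm ?_
    have hb : Summable (fun n : ℕ => ((n + 1 : ℕ) : ℝ) ^ (-s.re) * C) :=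
      (pser_summable' (by linarith)).mul_right C
    refine hb.of_nonneg_of_le (fun n => norm_nonneg _) (fun n => ?_)
    have hpos : (0:ℝ) < ((n + 1 : ℕ) : ℝ) := by positivity
    have hnc : ‖((n + 1 : ℕ) : ℂ) ^ (-s)‖ = ((n + 1 : ℕ) : ℝ) ^ (-s).re := by
      rw [show ((n + 1 : ℕ) : ℂ) = (((n + 1 : ℕ) : ℝ) : ℂ) by push_cast; ring,
        Complex.norm_cpow_eq_rpow_re_of_pos hpos]
    rw [norm_smul, hnc]
    have h2 : (0:ℝ) ≤ ((n + 1 : ℕ) : ℝ) ^ (-s).re := Real.rpow_nonneg hpos.le _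
    have h3 : ((n + 1 : ℕ) : ℝ) ^ (-s).re = ((n + 1 : ℕ) : ℝ) ^ (-s.re) := by simp
    rw [h3] at h2 ⊢
    exact mul_le_mul_of_nonneg_left (hC _) h2
  exact ⟨∑' n, (((n + 1 : ℕ) : ℂ) ^ (-s)) • a (n + 1), hsum.hasSum.tendsto_sum_nat⟩

/-- If the twisted sequence is norm bounded, then `σ_a ≤ w + 1`. -/
lemma sigmaA_le_general (a : ℕ → X) (w : ℝ)
    (hbdd : ∃ C, ∀ n, ‖(((n + 1 : ℕ) : ℝ) ^ (-w)) • a (n + 1)‖ ≤ C) :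
    dirichletSigmaA a ≤ ((w + 1 : ℝ) : EReal) := by
  obtain ⟨C, hC⟩ := hbdd
  refine sInf_le ⟨w + 1, rfl, fun σ hσ => ?_⟩
  have hsum : Summable (fun n : ℕ => C * ((n + 1 : ℕ) : ℝ) ^ (-(σ - w))) :=
    (pser_summable' (by linarith)).mul_left C
  refine hsum.of_nonneg_of_le (fun n => by positivity) (fun n => ?_)
  rw [rw_final a w σ n]
  exact mul_le_mul_of_nonneg_right (hC n) (Real.rpow_nonneg (by positivity) _)

/-- If the twisted sequence is strongly `p`-summable then `σ_a ≤ w + (1 - 1/p)`. -/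
lemma sigmaA_le_p (a : ℕ → X) (w p : ℝ) (hp : 2 ≤ p)
    (hy : Summable (fun n : ℕ => ‖(((n + 1 : ℕ) : ℝ) ^ (-w)) • a (n + 1)‖ ^ p)) :
    dirichletSigmaA a ≤ ((w + (1 - 1/p) : ℝ) : EReal) := by
  have hp0 : (0:ℝ) < p := by linarith
  have hw2 : (0:ℝ) < 1 - 1/p := by
    have : 1/p ≤ 1/2 := by
      rw [div_le_div_iff₀ hp0 (by norm_num)]; linarith
    linarith
  refine sInf_le ⟨w + (1 - 1/p), rfl, fun σ hσ => ?_⟩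
  set τ := σ - w with hτ
  have hτ1 : 1 - 1/p < τ := by simp only [hτ]; linarith
  have hsum2 : Summable (fun n : ℕ => (1/p) * ‖(((n + 1 : ℕ) : ℝ) ^ (-w)) • a (n + 1)‖ ^ p
      + (1 - 1/p) * ((n + 1 : ℕ) : ℝ) ^ (-(τ / (1 - 1/p)))) := by
    refine (hy.mul_left _).add ((pser_summable' ?_).mul_left _)
    rw [lt_div_iff₀ hw2]; linarith
  refine hsum2.of_nonneg_of_le (fun n => by positivity) (fun n => ?_)
  rw [rw_final a w σ n, ← hτ]
  set Y := ‖(((n + 1 : ℕ) : ℝ) ^ (-w)) • a (n + 1)‖ with hY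
  have hY0 : 0 ≤ Y := norm_nonneg _
  have hN0 : (0:ℝ) < ((n + 1 : ℕ) : ℝ) := by positivity
  have key := Real.geom_mean_le_arith_mean2_weighted
    (le_of_lt (by positivity : (0:ℝ) < 1/p)) (le_of_lt hw2)
    (Real.rpow_nonneg hY0 p) (Real.rpow_nonneg hN0.le (-(τ / (1 - 1/p))))
    (by field_simp; ring)
  calc Y * ((n + 1 : ℕ) : ℝ) ^ (-τ)
      = (Y ^ p) ^ (1/p) * (((n + 1 : ℕ) : ℝ) ^ (-(τ / (1 - 1/p)))) ^ (1 - 1/p) := by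
        have e1 : (Y ^ p) ^ (1/p) = Y := by
          rw [← Real.rpow_mul hY0, mul_one_div_cancel (ne_of_gt hp0), Real.rpow_one]
        have e2 : (((n + 1 : ℕ) : ℝ) ^ (-(τ / (1 - 1/p)))) ^ (1 - 1/p)
            = ((n + 1 : ℕ) : ℝ) ^ (-τ) := by
          rw [← Real.rpow_mul hN0.le]
          congr 1
          field_simp
          rw [mul_div_assoc, div_self (ne_of_gt (by linarith : (0:ℝ) < p - 1))]
          ring
        rw [e1, e2]
    _ ≤ _ := key

lemma weak_summable_of_sigmaAw_lt {a : ℕ → X} {w : ℝ}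
    (h : dirichletSigmaAw a < (w : EReal)) (x' : X →L[ℂ] ℂ) :
    Summable (fun n : ℕ => ‖x' (a (n + 1))‖ * ((n + 1 : ℕ) : ℝ) ^ (-w)) := by
  have h1 : dirichletSigmaA (fun n => x' (a n)) < (w : EReal) :=
    lt_of_le_of_lt (le_iSup (fun x' : X →L[ℂ] ℂ => dirichletSigmaA (fun n => x' (a n))) x') h
  obtain ⟨e, ⟨r', rfl, hr'⟩, hlt⟩ := sInf_lt_iff.1 h1
  rw [EReal.coe_lt_coe_iff] at hlt
  exact hr' w hlt

lemma gap_le_of (a : ℕ → X) (c : ℝ)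
    (H : ∀ w : ℝ,
      (∀ x' : X →L[ℂ] ℂ, Summable (fun n : ℕ => ‖x' (a (n + 1))‖ * ((n + 1 : ℕ) : ℝ) ^ (-w))) →
      dirichletSigmaA a ≤ ((w + c : ℝ) : EReal)) :
    dirichletSigmaA a - dirichletSigmaAw a ≤ (c : EReal) := by
  by_cases htop : dirichletSigmaAw a = ⊤
  · rw [htop]; simp
  by_cases hbot : dirichletSigmaAw a = ⊥
  · have hA : dirichletSigmaA a = ⊥ := by
      refine ereal_eq_bot_of_le_forall fun w => ?_
      have hlt : dirichletSigmaAw a < ((w - c : ℝ) : EReal) := by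
        rw [hbot]; exact bot_lt_iff_ne_bot.2 (EReal.coe_ne_bot _)
      have h1 := H (w - c) (fun x' => weak_summable_of_sigmaAw_lt hlt x')
      simpa using h1
    rw [hA, hbot]
    simp
  · obtain ⟨r, hr⟩ : ∃ r : ℝ, dirichletSigmaAw a = (r : EReal) :=
      ⟨(dirichletSigmaAw a).toReal, (EReal.coe_toReal htop hbot).symm⟩
    have hA : dirichletSigmaA a ≤ ((r + c : ℝ) : EReal) := by
      refine ereal_le_coe_of_forall_lt fun w hwgt => ?_
      have hlt : dirichletSigmaAw a < (w : EReal) := by rw [hr]; exact_mod_cast hwgt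
      exact H w (fun x' => weak_summable_of_sigmaAw_lt hlt x')
    rw [hr]
    calc dirichletSigmaA a - ((r : ℝ) : EReal) ≤ ((r + c : ℝ) : EReal) - ((r : ℝ) : EReal) :=
          EReal.sub_le_sub hA (le_refl _)
      _ = (c : EReal) := by rw [← EReal.coe_sub]; norm_num

lemma gap_elem [CompleteSpace X] (a : ℕ → X) (C σ₀ : ℝ)
    (hC : ∀ n, ‖a n‖ ≤ C)
    (hweak : ∀ x' : X →L[ℂ] ℂ, Summable (fun n => ‖x' (a (n + 1))‖))
    (hnons : ¬ Summable (fun n : ℕ => ‖a (n + 1)‖ * ((n + 1 : ℕ) : ℝ) ^ (-σ₀))) :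
    ∃ g ∈ {g : EReal | ∃ b : ℕ → X, dirichletSigmaC b < ⊤ ∧
        g = dirichletSigmaA b - dirichletSigmaAw b}, (σ₀ : EReal) ≤ g := by
  refine ⟨_, ⟨a, sigmaC_lt_top_of_bounded hC, rfl⟩, ?_⟩
  have h1 : (σ₀ : EReal) ≤ dirichletSigmaA a := sigmaA_ge hnons
  have h2 : dirichletSigmaAw a ≤ ((0 : ℝ) : EReal) := sigmaAw_le_zero hweak
  calc (σ₀ : EReal) = (σ₀ : EReal) - ((0 : ℝ) : EReal) := by
        rw [EReal.coe_zero]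
        exact (sub_zero _).symm
    _ ≤ dirichletSigmaA a - dirichletSigmaAw a := EReal.sub_le_sub h1 h2

lemma exists_gap_elem [CompleteSpace X] (p σ₀ : ℝ) (hp : 2 ≤ p) (h0 : 0 < σ₀)
    (h1 : σ₀ < 1 - 1/p) (x : ℕ → X)
    (hw : ∀ x' : X →L[ℂ] ℂ, Summable (fun n => ‖x' (x n)‖))
    (hns : ¬ Summable (fun n => ‖x n‖ ^ p)) :
    ∃ g ∈ {g : EReal | ∃ b : ℕ → X, dirichletSigmaC b < ⊤ ∧
        g = dirichletSigmaA b - dirichletSigmaAw b}, (σ₀ : EReal) ≤ g := by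
  have hp0 : (0:ℝ) < p := by linarith
  have hinvp : (0:ℝ) < 1/p := by positivity
  have hσlt1 : σ₀ < 1 := by linarith
  obtain ⟨C, hC⟩ := weak_l1_bounded x hw
  by_cases hcase : ∃ t : ℝ, 0 < t ∧ {k | t ≤ ‖x k‖}.Infinite
  · -- infinitely many norms bounded below: take a subsequence
    obtain ⟨t, ht, hinf⟩ := hcase
    set e' := hinf.natEmbedding with he'
    set i : ℕ → ℕ := fun n => (e' n : ℕ) with hi
    have hiinj : Function.Injective i := fun m n h => e'.injective (Subtype.coe_injective h)
    set a : ℕ → X := fun n => x (i n) with ha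
    have hanorm : ∀ n, t ≤ ‖a n‖ := fun n => (e' n).2
    refine gap_elem a C σ₀ (fun n => hC _) (fun x' => ?_) ?_
    · have hcomp : Function.Injective (fun n => i (n + 1)) :=
        fun m n h => by have := hiinj h; omega
      exact (hw x').comp_injective hcomp
    · intro hsum
      have hts : Summable (fun n : ℕ => t * ((n + 1 : ℕ) : ℝ) ^ (-σ₀)) := by
        refine hsum.of_nonneg_of_le (fun n => by positivity) (fun n => ?_)
        exact mul_le_mul_of_nonneg_right (hanorm _) (Real.rpow_nonneg (by positivity) _)
      exact pser_not_summable' (le_of_lt hσlt1)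
        ((summable_mul_left_iff (ne_of_gt ht)).1 hts)
  · -- all level sets finite: greedy decreasing rearrangement
    push_neg at hcase
    have hfin : ∀ t : ℝ, 0 < t → {k | t ≤ ‖x k‖}.Finite :=
      fun t ht => hcase t ht
    have hSinf : {k | x k ≠ 0}.Infinite := by
      intro hfinS
      apply hns
      refine summable_of_ne_finset_zero (s := hfinS.toFinset) (fun b hb => ?_)
      rw [Set.Finite.mem_toFinset] at hb
      have : x b = 0 := by by_contra hne; exact hb hne
      rw [this, norm_zero, Real.zero_rpow (ne_of_gt hp0)]
    obtain ⟨e, hinj, hne0, hanti, hsub⟩ := greedy_exists x hfin hSinf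
    set a : ℕ → X := fun n => x (e n) with ha
    have hμnn : ∀ n, 0 ≤ ‖x (e n)‖ := fun n => norm_nonneg _
    have hnsμ : ¬ Summable (fun n => ‖x (e n)‖ ^ p) := by
      intro hsμ
      apply hns
      have hvanish : ∀ k ∉ Set.range e, ‖x k‖ ^ p = 0 := by
        intro k hk
        have : x k = 0 := by
          by_contra hne
          exact hk (hsub hne)
        rw [this, norm_zero, Real.zero_rpow (ne_of_gt hp0)]
      exact (Function.Injective.summable_iff hinj hvanish).1 hsμ
    refine gap_elem a C σ₀ (fun n => hC _) (fun x' => ?_) ?_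
    · have hcomp : Function.Injective (fun n => e (n + 1)) :=
        fun m n h => by have := hinj h; omega
      exact (hw x').comp_injective hcomp
    · exact antitone_not_summable (fun n => ‖x (e n)‖) hμnn hanti p σ₀ hp h0 h1 hnsμ

end MainSection

/-- For an infinite-dimensional complex Banach space `X`, `G_a(X) = 1` if and only if the
identity of `X` is not `(p,1)`-summing for any `2 ≤ p < ∞`. -/
theorem gapA_eq_one_iff_not_p_one_summing
    (X : Type*) [NormedAddCommGroup X] [NormedSpace ℂ X] [CompleteSpace X]
    (hX : ¬ FiniteDimensional ℂ X) :
    dirichletGapA X = ((1 : ℝ) : EReal) ↔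
      ∀ p : ℝ, 2 ≤ p → ∃ x : ℕ → X,
        (∀ x' : X →L[ℂ] ℂ, Summable (fun n => ‖x' (x n)‖)) ∧
        ¬ Summable (fun n => ‖x n‖ ^ p) := by
  constructor
  · -- G_a(X) = 1 → not (p,1)-summing for every p
    intro h1 p hp2
    by_contra hcon
    push_neg at hcon
    have hub : dirichletGapA X ≤ ((1 - 1/p : ℝ) : EReal) := by
      refine sSup_le ?_
      rintro g ⟨a, hc, rfl⟩
      refine gap_le_of a (1 - 1/p) (fun w hw => ?_)
      have hwy : ∀ x' : X →L[ℂ] ℂ,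
          Summable (fun n => ‖x' ((((n + 1 : ℕ) : ℝ) ^ (-w)) • a (n + 1))‖) :=
        fun x' => (hw x').congr (fun n => (weak_y a w x' n).symm)
      exact sigmaA_le_p a w p hp2 (hcon _ hwy)
    rw [h1, EReal.coe_le_coe_iff] at hub
    have hp0 : (0:ℝ) < 1/p := by positivity
    linarith
  · -- not (p,1)-summing for every p → G_a(X) = 1
    intro hRHS
    refine le_antisymm ?_ ?_
    · refine sSup_le ?_
      rintro g ⟨a, hc, rfl⟩
      have h1 : dirichletSigmaA a - dirichletSigmaAw a ≤ ((1:ℝ) : EReal) := by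
        refine gap_le_of a 1 (fun w hw => ?_)
        refine sigmaA_le_general a w (weak_l1_bounded _ ?_)
        exact fun x' => ((hw x').congr (fun n => (weak_y a w x' n).symm))
      exact h1
    · by_contra hlt
      push_neg at hlt
      obtain ⟨c, hc1, hc2⟩ := EReal.exists_between_coe_real hlt
      set σ₀ : ℝ := max c (1/2) with hσ₀
      have hc2' : c < 1 := by exact_mod_cast hc2
      have hσ₀pos : 0 < σ₀ := lt_of_lt_of_le (by norm_num) (le_max_right _ _)
      have hσ₀lt1 : σ₀ < 1 := max_lt hc2' (by norm_num)
      have hσ₀half : 1/2 ≤ σ₀ := le_max_right _ _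
      set p : ℝ := 2 / (1 - σ₀) with hp
      have hden : 0 < 1 - σ₀ := by linarith
      have hp2 : 2 ≤ p := by
        rw [hp, le_div_iff₀ hden]
        linarith
      have hpinv : 1/p = (1 - σ₀)/2 := by
        rw [hp]
        field_simp
      have hσp : σ₀ < 1 - 1/p := by
        rw [hpinv]
        linarith
      obtain ⟨x, hw, hns⟩ := hRHS p hp2
      obtain ⟨g, hmem, hge⟩ := exists_gap_elem p σ₀ hp2 hσ₀pos hσp x hw hns
      have hsup : (σ₀ : EReal) ≤ dirichletGapA X := le_trans hge (le_sSup hmem)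
      have hcc : (c : EReal) ≤ (σ₀ : EReal) := by
        exact_mod_cast le_max_left c (1/2)
      exact absurd (lt_of_le_of_lt (le_trans hcc hsup) hc1) (lt_irrefl _)
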